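/- Let k be a field, S = k[x,y] the polynomial ring, and R = k + xS the subalgebra generated by x, xy, xy², .... Then R is not a noetherian ring. -/

import Mathlib

open MvPolynomial

private lemma aux_dvd (k : Type*) [Field k]
    (r : MvPolynomial (Fin 2) k)
    (hr : r ∈ Algebra.adjoin k {f : MvPolynomial (Fin 2) k | ∃ n : ℕ, f = X 0 * X 1 ^ n}) :
    X (0 : Fin 2) ∣ (r - C (constantCoeff r)) := by
  induction hr using Algebra.adjoin_induction with
  | mem f hf =>
      obtain ⟨n, rfl⟩ := hf
      have h0 : constantCoeff (X (0:Fin 2) * X 1 ^ n : MvPolynomial (Fin 2) k) = 0 := by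
        simp
      rw [h0, map_zero, sub_zero]
      exact Dvd.intro _ rfl
  | algebraMap a =>
      simp [MvPolynomial.algebraMap_eq]
  | add p q hp hq ihp ihq =>
      have h : p + q - C (constantCoeff (p + q)) =
          (p - C (constantCoeff p)) + (q - C (constantCoeff q)) := by
        rw [map_add, map_add]; ring
      rw [h]; exact dvd_add ihp ihq
  | mul p q hp hq ihp ihq =>
      have h : p * q - C (constantCoeff (p * q)) =
          p * (q - C (constantCoeff q)) + C (constantCoeff q) * (p - C (constantCoeff p)) := by
        rw [map_mul, map_mul]; ring
      rw [h]
      exact dvd_add (Dvd.dvd.mul_left ihq p) (Dvd.dvd.mul_left ihp _)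

set_option synthInstance.maxHeartbeats 800000 in
/-- For a field `k`, the subalgebra `R = k + xS = k[x, xy, xy², ...]`
of `S = k[x,y]` is not a noetherian ring. -/
theorem stmt_0 (k : Type*) [Field k] :
    ¬ IsNoetherianRing
      (Algebra.adjoin k {f : MvPolynomial (Fin 2) k | ∃ n : ℕ, f = X 0 * X 1 ^ n}) := by
  intro h
  set Rs := Algebra.adjoin k {f : MvPolynomial (Fin 2) k | ∃ n : ℕ, f = X 0 * X 1 ^ n}
    with hRs
  let J : Ideal Rs := RingHom.ker ((constantCoeff).comp (Subalgebra.val Rs).toRingHom)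
  obtain ⟨T, hT⟩ := (isNoetherianRing_iff_ideal_fg _).mp h J
  set N := T.sup (fun t => (t : MvPolynomial (Fin 2) k).totalDegree) with hNdef
  set d : Fin 2 →₀ ℕ := Finsupp.single 0 1 + Finsupp.single 1 N with hd
  have hdsum : (d.sum fun _ e => e) = 1 + N := by
    rw [hd, Finsupp.sum_add_index (by simp) (by simp)]
    simp
  have hpR : (X 0 * X 1 ^ N : MvPolynomial (Fin 2) k) ∈ Rs :=
    Algebra.subset_adjoin ⟨N, rfl⟩
  have hpJ : (⟨X 0 * X 1 ^ N, hpR⟩ : Rs) ∈ J := by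
    simp only [J, RingHom.mem_ker, RingHom.comp_apply]
    simp
  rw [← hT] at hpJ
  rw [Ideal.span, Submodule.mem_span_finset] at hpJ
  obtain ⟨f, -, hf⟩ := hpJ
  -- pass to S
  have hfS : ∑ t ∈ T, ((f t : MvPolynomial (Fin 2) k) * (t : MvPolynomial (Fin 2) k))
      = X 0 * X 1 ^ N := by
    have := congrArg (Subalgebra.val Rs) hf
    simpa [map_sum] using this
  -- take coefficient at d
  have hLHS : coeff d (X 0 * X 1 ^ N : MvPolynomial (Fin 2) k) = 1 := by
    rw [hd, coeff_X_mul, coeff_X_pow]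
    simp
  have hterm : ∀ t ∈ T,
      coeff d ((f t : MvPolynomial (Fin 2) k) * (t : MvPolynomial (Fin 2) k)) = 0 := by
    intro t ht
    have htJ : t ∈ J := by
      rw [← hT]; exact Ideal.subset_span ht
    have htc : constantCoeff (t : MvPolynomial (Fin 2) k) = 0 := htJ
    obtain ⟨u, hu⟩ : X (0 : Fin 2) ∣ (t : MvPolynomial (Fin 2) k) := by
      have := aux_dvd k (t : MvPolynomial (Fin 2) k) t.2
      rwa [htc, map_zero, sub_zero] at this
    obtain ⟨s, hs⟩ := aux_dvd k (f t : MvPolynomial (Fin 2) k) (f t).2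
    have hft : (f t : MvPolynomial (Fin 2) k)
        = C (constantCoeff (f t : MvPolynomial (Fin 2) k)) + X 0 * s := by
      rw [← hs]; ring
    rw [hft, add_mul, coeff_add]
    have h1 : coeff d (C (constantCoeff (f t : MvPolynomial (Fin 2) k))
        * (t : MvPolynomial (Fin 2) k)) = 0 := by
      rw [coeff_C_mul]
      have hdeg : (t : MvPolynomial (Fin 2) k).totalDegree < d.sum fun _ e => e := by
        rw [hdsum]
        have : (t : MvPolynomial (Fin 2) k).totalDegree ≤ N := by
          rw [hNdef]
          exact Finset.le_sup (f := fun t : Rs => (t : MvPolynomial (Fin 2) k).totalDegree) ht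
        omega
      rw [coeff_eq_zero_of_totalDegree_lt hdeg, mul_zero]
    have h2 : coeff d (X 0 * s * (t : MvPolynomial (Fin 2) k)) = 0 := by
      rw [hu, show (X (0:Fin 2) * s * (X 0 * u)) = (s * u * X 0) * X 0 by ring]
      rw [coeff_mul_X']
      have h0d : (0 : Fin 2) ∈ d.support := by
        simp [hd, Finsupp.single_apply]
      rw [if_pos h0d]
      have hdd : d - Finsupp.single 0 1 = Finsupp.single 1 N := by
        rw [hd]; ext i; simp [Finsupp.single_apply]
      rw [hdd, coeff_mul_X']
      rw [if_neg (by simp [Finsupp.single_apply])]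
    rw [h1, h2, add_zero]
  have : (1 : k) = 0 := by
    calc (1 : k) = coeff d (X 0 * X 1 ^ N : MvPolynomial (Fin 2) k) := hLHS.symm
    _ = ∑ t ∈ T, coeff d ((f t : MvPolynomial (Fin 2) k) * (t : MvPolynomial (Fin 2) k)) := by
        rw [← hfS, coeff_sum]
    _ = 0 := Finset.sum_eq_zero hterm
  exact one_ne_zero this
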